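/- For every uncountable cardinal κ of countable cofinality, cof([κ]^ℵ₀) > κ. -/

import Mathlib

open Set Filter

universe u

/-- Least cardinality of a cofinal subset of a preorder. -/
noncomputable def poCof (α : Type u) [Preorder α] : Cardinal.{u} :=
  sInf { c | ∃ S : Set α, (∀ a : α, ∃ b ∈ S, a ≤ b) ∧ Cardinal.mk S = c }

/-- `cof([X]^ℵ₀)`: cofinality of the family of countably infinite subsets of `X`,
ordered by inclusion. -/
noncomputable def ctblCof (X : Type u) : Cardinal.{u} :=
  poCof { A : Set X // A.Countable ∧ A.Infinite }

/-- The dominating number 𝔡. -/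
noncomputable def dNum : Cardinal :=
  sInf { c | ∃ D : Set (ℕ → ℕ),
    (∀ f : ℕ → ℕ, ∃ g ∈ D, ∀ᶠ n in atTop, f n ≤ g n) ∧ Cardinal.mk D = c }

/-- The unbounding number 𝔟. -/
noncomputable def bNum : Cardinal :=
  sInf { c | ∃ B : Set (ℕ → ℕ),
    (∀ g : ℕ → ℕ, ∃ f ∈ B, ¬ ∀ᶠ n in atTop, f n ≤ g n) ∧ Cardinal.mk B = c }

/-- An almost disjoint family on ℕ. -/
def AlmostDisjoint (𝒜 : Set (Set ℕ)) : Prop :=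
  (∀ A ∈ 𝒜, A.Infinite) ∧ ∀ A ∈ 𝒜, ∀ B ∈ 𝒜, A ≠ B → (A ∩ B).Finite

/-- The underlying set of the Isbell–Mrówka space `Ψ(𝒜) = ℕ ∪ 𝒜`. -/
abbrev PsiSpace (𝒜 : Set (Set ℕ)) : Type := ℕ ⊕ ↥𝒜

/-- The Isbell–Mrówka topology: naturals are isolated, and basic neighborhoods
of `A ∈ 𝒜` are `{A} ∪ (A \ F)` for finite `F`. -/
instance psiTop (𝒜 : Set (Set ℕ)) : TopologicalSpace (PsiSpace 𝒜) where
  IsOpen U := ∀ A : 𝒜, Sum.inr A ∈ U → { n : ℕ | n ∈ (A : Set ℕ) ∧ Sum.inl n ∉ U }.Finite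
  isOpen_univ := by
    intro A _
    convert Set.finite_empty using 1
    ext n; simp
  isOpen_inter := by
    intro U V hU hV A hA
    apply ((hU A hA.1).union (hV A hA.2)).subset
    rintro n ⟨h1, h2⟩
    by_cases h : Sum.inl n ∈ U
    · exact Or.inr ⟨h1, fun hv => h2 ⟨h, hv⟩⟩
    · exact Or.inl ⟨h1, h⟩
  isOpen_sUnion := by
    intro s hs A hA
    obtain ⟨t, ht, hAt⟩ := hA
    apply (hs t ht A hAt).subset
    rintro n ⟨h1, h2⟩
    exact ⟨h1, fun h => h2 ⟨t, ht, h⟩⟩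

/-- `st(S, 𝒰) = ⋃ {U ∈ 𝒰 : U ∩ S ≠ ∅}`. -/
def starSet {X : Type*} (S : Set X) (𝒰 : Set (Set X)) : Set X :=
  ⋃₀ { U ∈ 𝒰 | (U ∩ S).Nonempty }

def StarMenger (X : Type*) [TopologicalSpace X] : Prop :=
  ∀ 𝒰 : ℕ → Set (Set X), (∀ n, ∀ U ∈ 𝒰 n, IsOpen U) → (∀ n, ⋃₀ 𝒰 n = univ) →
    ∃ ℱ : ℕ → Set (Set X), (∀ n, ℱ n ⊆ 𝒰 n ∧ (ℱ n).Finite) ∧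
      (⋃ n, starSet (⋃₀ ℱ n) (𝒰 n)) = univ

def StarHurewicz (X : Type*) [TopologicalSpace X] : Prop :=
  ∀ 𝒰 : ℕ → Set (Set X), (∀ n, ∀ U ∈ 𝒰 n, IsOpen U) → (∀ n, ⋃₀ 𝒰 n = univ) →
    ∃ ℱ : ℕ → Set (Set X), (∀ n, ℱ n ⊆ 𝒰 n ∧ (ℱ n).Finite) ∧
      ∀ x : X, ∀ᶠ n in atTop, x ∈ starSet (⋃₀ ℱ n) (𝒰 n)

def StarRothberger (X : Type*) [TopologicalSpace X] : Prop :=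
  ∀ 𝒰 : ℕ → Set (Set X), (∀ n, ∀ U ∈ 𝒰 n, IsOpen U) → (∀ n, ⋃₀ 𝒰 n = univ) →
    ∃ U : ℕ → Set X, (∀ n, U n ∈ 𝒰 n) ∧ (⋃ n, starSet (U n) (𝒰 n)) = univ

def StronglyStarMenger (X : Type*) [TopologicalSpace X] : Prop :=
  ∀ 𝒰 : ℕ → Set (Set X), (∀ n, ∀ U ∈ 𝒰 n, IsOpen U) → (∀ n, ⋃₀ 𝒰 n = univ) →
    ∃ F : ℕ → Set X, (∀ n, (F n).Finite) ∧ (⋃ n, starSet (F n) (𝒰 n)) = univ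

def StronglyStarHurewicz (X : Type*) [TopologicalSpace X] : Prop :=
  ∀ 𝒰 : ℕ → Set (Set X), (∀ n, ∀ U ∈ 𝒰 n, IsOpen U) → (∀ n, ⋃₀ 𝒰 n = univ) →
    ∃ F : ℕ → Set X, (∀ n, (F n).Finite) ∧
      ∀ x : X, ∀ᶠ n in atTop, x ∈ starSet (F n) (𝒰 n)

/-- for uncountable `κ` of countable cofinality, `cof([κ]^ℵ₀) > κ`. -/
theorem ctblCof_gt_of_countable_cof (κ : Cardinal.{0}) (hκ : Cardinal.aleph0 < κ)
    (hcf : (Cardinal.ord κ).cof = Cardinal.aleph0) :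
    κ < ctblCof (Quotient.out κ) := by
  classical
  set α := Quotient.out κ with hα
  have hmkα : Cardinal.mk α = κ := Cardinal.mk_out κ
  -- cofinal sequence of ordinals o n < ord κ
  obtain ⟨ι, f, hlsub, hι⟩ := Ordinal.exists_lsub_cof (Cardinal.ord κ)
  obtain ⟨e⟩ : Nonempty (ι ≃ ℕ) := Cardinal.eq.mp (by rw [hι, hcf, Cardinal.mk_nat])
  have hlim : Order.IsSuccLimit (Cardinal.ord κ) := Cardinal.isSuccLimit_ord hκ.le
  set o : ℕ → Ordinal := fun n => f (e.symm n) + 1 with ho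
  have holt : ∀ n, o n < Cardinal.ord κ := by
    intro n
    have := hlim.succ_lt (hlsub ▸ Ordinal.lt_lsub f (e.symm n))
    show f (e.symm n) + 1 < _
    rw [Ordinal.add_one_eq_succ]; exact this
  have hocof : ∀ b < Cardinal.ord κ, ∃ n, b < o n := by
    intro b hb
    rw [← hlsub, Ordinal.lt_lsub_iff] at hb
    obtain ⟨i, hi⟩ := hb
    refine ⟨e i, ?_⟩
    show b < f (e.symm (e i)) + 1
    rw [Equiv.symm_apply_apply, Ordinal.add_one_eq_succ]
    exact hi.trans_lt (Order.lt_succ _)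
  have hmain : ∀ S : Set {A : Set α // A.Countable ∧ A.Infinite},
      (∀ a, ∃ b ∈ S, a ≤ b) → κ < Cardinal.mk S := by
    intro S hScof
    by_contra hle
    rw [not_lt] at hle
    haveI hwo : IsWellOrder (Cardinal.ord κ).ToType (· < ·) := isWellOrder_lt
    have hβ : Cardinal.mk (Cardinal.ord κ).ToType = κ := Cardinal.mk_ord_toType κ
    obtain ⟨j⟩ : Nonempty (S ↪ (Cardinal.ord κ).ToType) :=
      Cardinal.le_def _ _ |>.mp (by rw [hβ]; exact hmkα ▸ hle)
    set rk : S → Ordinal.{0} := fun t =>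
      Ordinal.typein ((· < ·) : (Cardinal.ord κ).ToType → (Cardinal.ord κ).ToType → Prop) (j t) with hrk
    have hrklt : ∀ t, rk t < Cardinal.ord κ := by
      intro t
      have := Ordinal.typein_lt_type ((· < ·) : (Cardinal.ord κ).ToType → (Cardinal.ord κ).ToType → Prop) (j t)
      rwa [Ordinal.type_toType] at this
    set U : ℕ → Set α := fun n => ⋃ t ∈ {t : S | rk t < o n}, ((t : _).1.1 : Set α) with hU
    have hUlt : ∀ n, Cardinal.mk (U n) < κ := by
      intro n
      have h1 : Cardinal.mk {t : S | rk t < o n} < κ := by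
        obtain ⟨bn, hbn⟩ := Ordinal.typein_surj ((· < ·) : (Cardinal.ord κ).ToType → (Cardinal.ord κ).ToType → Prop)
          (show o n < Ordinal.type _ by rw [Ordinal.type_toType]; exact holt n)
        have hemb : Cardinal.mk {t : S | rk t < o n} ≤ Cardinal.mk {y // y < bn} := by
          refine ⟨⟨fun t => ⟨j t.1, ?_⟩, ?_⟩⟩
          · have h3 : rk t.1 < o n := t.2
            have h4 : Ordinal.typein ((· < ·) : (Cardinal.ord κ).ToType → (Cardinal.ord κ).ToType → Prop) (j t.1)
                < Ordinal.typein ((· < ·) : (Cardinal.ord κ).ToType → (Cardinal.ord κ).ToType → Prop) bn := by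
              rw [hbn]; exact h3
            exact (Ordinal.typein_lt_typein _).mp h4
          · intro t₁ t₂ h
            simp only [Subtype.mk.injEq] at h
            exact Subtype.ext (j.injective h)
        have h2 : Cardinal.mk {y // y < bn} = (o n).card := by
          rw [← Ordinal.card_typein, hbn]
        rw [h2] at hemb
        exact lt_of_le_of_lt hemb (Cardinal.lt_ord.mp (holt n))
      by_cases hne : {t : S | rk t < o n}.Nonempty
      · haveI := hne.to_subtype
        calc Cardinal.mk (U n)
            ≤ Cardinal.mk {t : S | rk t < o n} * ⨆ t : {t : S | rk t < o n},
                Cardinal.mk ((t : S).1.1 : Set α) :=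
              Cardinal.mk_biUnion_le _ _
          _ ≤ Cardinal.mk {t : S | rk t < o n} * Cardinal.aleph0 := by
              refine mul_le_mul_right (ciSup_le' fun t => ?_) _
              haveI : Countable ((t : S).1.1 : Set α) :=
                Set.countable_coe_iff.mpr (t : S).1.2.1
              exact Cardinal.mk_le_aleph0
          _ < κ := Cardinal.mul_lt_of_lt hκ.le h1 hκ
      · rw [Set.not_nonempty_iff_eq_empty] at hne
        have : U n = ∅ := by rw [hU]; simp [hne]
        rw [this, Cardinal.mk_emptyCollection]
        exact Cardinal.aleph0_pos.trans hκ
    have hx : ∀ n, ∃ a : α, a ∉ U n := by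
      intro n
      by_contra h
      push_neg at h
      have huniv : U n = Set.univ := eq_univ_of_forall h
      have := hUlt n
      rw [huniv, Cardinal.mk_univ, hmkα] at this
      exact lt_irrefl _ this
    choose x hxn using hx
    haveI : Infinite α := by
      rw [Cardinal.infinite_iff, hmkα]; exact hκ.le
    set emb := Infinite.natEmbedding α with hemb
    set B : Set α := Set.range x ∪ Set.range emb with hB
    have hBc : B.Countable := (countable_range x).union (countable_range emb)
    have hBi : B.Infinite :=
      (Set.infinite_range_of_injective emb.injective).mono subset_union_right
    obtain ⟨A, hAS, hBA⟩ := hScof ⟨B, hBc, hBi⟩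
    set t : S := ⟨A, hAS⟩ with ht
    obtain ⟨n, hn⟩ := hocof (rk t) (hrklt t)
    have hsub : (A.1 : Set α) ⊆ U n := by
      intro a ha
      exact Set.mem_biUnion (show t ∈ {t : S | rk t < o n} from hn) ha
    have hxB : x n ∈ B := Set.mem_union_left _ (Set.mem_range_self n)
    have hxA : x n ∈ A.1 := hBA hxB
    exact hxn n (hsub hxA)
  -- conclude
  rw [ctblCof, poCof]
  have hne : { c | ∃ S : Set {A : Set α // A.Countable ∧ A.Infinite},
      (∀ a, ∃ b ∈ S, a ≤ b) ∧ Cardinal.mk S = c }.Nonempty :=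
    ⟨_, Set.univ, fun a => ⟨a, mem_univ a, le_refl a⟩, rfl⟩
  obtain ⟨S, hS, hc⟩ := csInf_mem hne
  rw [← hc]
  exact hmain S hS
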